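/- Let F = (F_i)_{i∈I} be a finite indexed family of nonempty sets with Helly number 2 (every pairwise-intersecting subfamily has a common point), let λ = ν(F) be its packing number, and let p ≥ q ≥ 2 be integers with |I| ≥ p, q − 1 ≥ 1 and p − λ ≥ q − 1. Suppose F satisfies the (p,q)-property, and suppose there is an integer s ≥ 1 such that every subfamily of F satisfying the (p−λ, q−1)-property can be pierced by at most s points. Then F can be pierced by at most s + λ − 1 points. -/

import Mathlib

/-- The `(p,q)`-property for a finite indexed family of sets. -/
def HasPQ {ι α : Type*} [Fintype ι] (F : ι → Set α) (p q : ℕ) : Prop :=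
  p ≤ Fintype.card ι ∧
    ∀ J : Finset ι, J.card = p → ∃ K ⊆ J, K.card = q ∧ (⋂ k ∈ K, F k).Nonempty

/-- The `(p,q)`-property for the subfamily indexed by `S`. -/
def HasPQOn {ι α : Type*} (F : ι → Set α) (S : Finset ι) (p q : ℕ) : Prop :=
  p ≤ S.card ∧
    ∀ J ⊆ S, J.card = p → ∃ K ⊆ J, K.card = q ∧ (⋂ k ∈ K, F k).Nonempty

/-- `P` pierces the family `F`: every member of `F` contains a point of `P`. -/
def Pierces {ι α : Type*} (F : ι → Set α) (P : Finset α) : Prop :=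
  ∀ i, ∃ x ∈ P, x ∈ F i

/-- Observation 2.1 (Wegner, Dol'nikov): for a family `F` with Helly number 2
and packing number `λ`, one has `HD_F(p,q) ≤ HD_F(p-λ, q-1) + λ - 1`. -/
theorem wegner_dolnikov_observation {ι α : Type} [Fintype ι] (F : ι → Set α)
    (hne : ∀ i, (F i).Nonempty)
    (helly : ∀ S : Finset ι,
      (∀ i ∈ S, ∀ j ∈ S, (F i ∩ F j).Nonempty) → (⋂ i ∈ S, F i).Nonempty)
    (lam : ℕ)
    (hpack : IsGreatest {n : ℕ | ∃ S : Finset ι, S.card = n ∧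
      ∀ i ∈ S, ∀ j ∈ S, i ≠ j → F i ∩ F j = ∅} lam)
    (p q : ℕ) (hq2 : 2 ≤ q) (hqp : q ≤ p) (hcard : p ≤ Fintype.card ι)
    (hq1 : 1 ≤ q - 1) (hlam : q - 1 ≤ p - lam)
    (s : ℕ) (hs : 1 ≤ s)
    (hsub : ∀ S : Finset ι, HasPQOn F S (p - lam) (q - 1) →
      ∃ P : Finset α, P.card ≤ s ∧ ∀ i ∈ S, ∃ x ∈ P, x ∈ F i)
    (hpq : HasPQ F p q) :
    ∃ P : Finset α, P.card ≤ s + lam - 1 ∧ Pierces F P := by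
  classical
  obtain ⟨⟨L, hLcard, hLdisj⟩, hub⟩ := hpack
  -- the subfamily off the packing
  set S₀ : Finset ι := Finset.univ \ L with hS₀def
  have hS₀card : p - lam ≤ S₀.card := by
    have h1 : S₀.card = Fintype.card ι - lam := by
      rw [hS₀def, Finset.card_sdiff_of_subset (Finset.subset_univ L), Finset.card_univ, hLcard]
    rw [h1]
    exact Nat.sub_le_sub_right hcard lam
  -- S₀ satisfies the (p-lam, q-1) property
  have hgood : HasPQOn F S₀ (p - lam) (q - 1) := by
    refine ⟨hS₀card, fun J hJS₀ hJcard => ?_⟩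
    have hdisj : Disjoint J L := by
      rw [Finset.disjoint_left]
      intro a haJ haL
      have h1 := hJS₀ haJ
      rw [hS₀def, Finset.mem_sdiff] at h1
      exact h1.2 haL
    have hTcard : (J ∪ L).card = p := by
      rw [Finset.card_union_of_disjoint hdisj, hJcard, hLcard]
      omega
    obtain ⟨K, hKT, hKcard, w, hw⟩ := hpq.2 (J ∪ L) hTcard
    have hwK : ∀ k ∈ K, w ∈ F k := fun k hk => Set.mem_iInter₂.mp hw k hk
    have hKL : (K ∩ L).card ≤ 1 := by
      by_contra hcon
      push_neg at hcon
      obtain ⟨a, ha, b, hb, hab⟩ := Finset.one_lt_card.mp hcon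
      have haK := Finset.mem_inter.mp ha
      have hbK := Finset.mem_inter.mp hb
      have hdab := hLdisj a haK.2 b hbK.2 hab
      have hwab : w ∈ F a ∩ F b := ⟨hwK a haK.1, hwK b hbK.1⟩
      rw [hdab] at hwab
      exact hwab
    have hKsplit : (K \ L).card + (K ∩ L).card = K.card :=
      Finset.card_sdiff_add_card_inter K L
    have hKJcard : q - 1 ≤ (K \ L).card := by omega
    have hKJ : K \ L ⊆ J := by
      intro k hk
      rw [Finset.mem_sdiff] at hk
      rcases Finset.mem_union.mp (hKT hk.1) with h | h
      · exact h
      · exact absurd h hk.2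
    obtain ⟨K', hK'sub, hK'card⟩ := Finset.exists_subset_card_eq hKJcard
    refine ⟨K', hK'sub.trans hKJ, hK'card, ⟨w, ?_⟩⟩
    exact Set.mem_iInter₂.mpr fun k hk => hwK k (Finset.mem_sdiff.mp (hK'sub hk)).1
  obtain ⟨P₀, hP₀card, hP₀⟩ := hsub S₀ hgood
  by_cases hS₀e : S₀ = ∅
  · -- everything is in the packing: cover it pointwise
    have hLuniv : ∀ i : ι, i ∈ L := by
      intro i
      exact (Finset.sdiff_eq_empty_iff_subset.mp hS₀e) (Finset.mem_univ i)
    refine ⟨L.image (fun t => (hne t).choose), ?_, ?_⟩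
    · calc (L.image (fun t => (hne t).choose)).card
          ≤ L.card := Finset.card_image_le
        _ = lam := hLcard
        _ ≤ s + lam - 1 := by omega
    · intro i
      exact ⟨(hne i).choose, Finset.mem_image_of_mem _ (hLuniv i), (hne i).choose_spec⟩
  · obtain ⟨i₀, hi₀⟩ := Finset.nonempty_of_ne_empty hS₀e
    obtain ⟨x, hxP₀, _⟩ := hP₀ i₀ hi₀
    -- the indices pierced only by x
    set Load : Finset ι := S₀.filter (fun i => ∀ y ∈ P₀.erase x, y ∉ F i) with hLoaddef
    have hLoadx : ∀ i ∈ Load, x ∈ F i := by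
      intro i hi
      rw [hLoaddef, Finset.mem_filter] at hi
      obtain ⟨y, hyP₀, hyF⟩ := hP₀ i hi.1
      by_cases hyx : y = x
      · rw [← hyx]; exact hyF
      · exact absurd hyF (hi.2 y (Finset.mem_erase.mpr ⟨hyx, hyP₀⟩))
    -- maximality of the packing: every index off the packing meets some member
    have hdom : ∀ i ∈ S₀, ∃ t ∈ L, (F i ∩ F t).Nonempty := by
      intro i hi
      by_contra hcon
      push_neg at hcon
      have hiL : i ∉ L := by
        rw [hS₀def, Finset.mem_sdiff] at hi
        exact hi.2
      have hmem : ((insert i L).card) ∈ {n : ℕ | ∃ S : Finset ι, S.card = n ∧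
          ∀ a ∈ S, ∀ b ∈ S, a ≠ b → F a ∩ F b = ∅} := by
        refine ⟨insert i L, rfl, ?_⟩
        intro a ha b hb hab
        rw [Finset.mem_insert] at ha hb
        rcases ha with ha | ha <;> rcases hb with hb | hb
        · exact absurd (ha.trans hb.symm) hab
        · subst ha
          exact hcon b hb
        · subst hb
          rw [Set.inter_comm]
          exact hcon a ha
        · exact hLdisj a ha b hb hab
      have hcard1 : (insert i L).card = lam + 1 := by
        rw [Finset.card_insert_of_notMem hiL, hLcard]
      have := hub hmem
      omega
    -- a Helly point for each packing member together with its share of the load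
    have hz : ∀ t, t ∈ L → ∃ z : α, z ∈ F t ∧
        ∀ i ∈ Load, (F i ∩ F t).Nonempty → z ∈ F i := by
      intro t ht
      set W : Finset ι := insert t (Load.filter (fun i => (F i ∩ F t).Nonempty)) with hWdef
      have hpair : ∀ a ∈ W, ∀ b ∈ W, (F a ∩ F b).Nonempty := by
        intro a ha b hb
        rw [hWdef, Finset.mem_insert] at ha hb
        rcases ha with ha | ha <;> rcases hb with hb | hb
        · rw [ha, hb, Set.inter_self]
          exact hne t
        · rw [ha, Set.inter_comm]
          exact (Finset.mem_filter.mp hb).2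
        · rw [hb]
          exact (Finset.mem_filter.mp ha).2
        · exact ⟨x, hLoadx a (Finset.mem_filter.mp ha).1, hLoadx b (Finset.mem_filter.mp hb).1⟩
      obtain ⟨w, hw⟩ := helly W hpair
      have hwmem : ∀ a ∈ W, w ∈ F a := fun a ha => Set.mem_iInter₂.mp hw a ha
      refine ⟨w, hwmem t (by rw [hWdef]; exact Finset.mem_insert_self _ _), ?_⟩
      intro i hiLoad hint
      exact hwmem i (by
        rw [hWdef]
        exact Finset.mem_insert_of_mem (Finset.mem_filter.mpr ⟨hiLoad, hint⟩))
    set zf : ι → α := fun t => if h : t ∈ L then (hz t h).choose else (hne t).choose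
      with hzfdef
    refine ⟨(P₀.erase x) ∪ L.image zf, ?_, ?_⟩
    · have h1 : (P₀.erase x).card = P₀.card - 1 := Finset.card_erase_of_mem hxP₀
      have h2 : (L.image zf).card ≤ lam := hLcard ▸ Finset.card_image_le
      calc ((P₀.erase x) ∪ L.image zf).card
          ≤ (P₀.erase x).card + (L.image zf).card := Finset.card_union_le _ _
        _ ≤ (P₀.card - 1) + lam := by omega
        _ ≤ s + lam - 1 := by omega
    · intro i
      by_cases hiL : i ∈ L
      · refine ⟨zf i, Finset.mem_union_right _ (Finset.mem_image_of_mem zf hiL), ?_⟩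
        have hzeq : zf i = (hz i hiL).choose := by rw [hzfdef]; simp [hiL]
        rw [hzeq]
        exact ((hz i hiL).choose_spec).1
      · have hiS₀ : i ∈ S₀ := by
          rw [hS₀def, Finset.mem_sdiff]
          exact ⟨Finset.mem_univ i, hiL⟩
        by_cases hcov : ∃ y ∈ P₀.erase x, y ∈ F i
        · obtain ⟨y, hy1, hy2⟩ := hcov
          exact ⟨y, Finset.mem_union_left _ hy1, hy2⟩
        · push_neg at hcov
          have hiLoad : i ∈ Load := by
            rw [hLoaddef, Finset.mem_filter]
            exact ⟨hiS₀, hcov⟩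
          obtain ⟨t, htL, hint⟩ := hdom i hiS₀
          refine ⟨zf t, Finset.mem_union_right _ (Finset.mem_image_of_mem zf htL), ?_⟩
          have hzeq : zf t = (hz t htL).choose := by rw [hzfdef]; simp [htL]
          rw [hzeq]
          exact ((hz t htL).choose_spec).2 i hiLoad hint
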